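/- Let f_n denote the number of nonempty families D of subsets of 2^N\{∅,N} (|N|=n) whose intersection ⋂D is nonempty. Then f_1 = 0 and f_n = Σ_{k=1}^{n−1} C(n,k)·(2^(2^k − 1) − f_k − 1) for n > 1. -/

import Mathlib

open Finset

/-- `fval n` is the number of nonempty families `D` of subsets of `2^N \ {∅, N}`
(`|N| = n`) whose intersection is nonempty. -/
def fval (n : ℕ) : ℕ :=
  (Finset.univ.filter (fun D : Finset (Finset (Fin n)) =>
    D.Nonempty ∧ (∀ S ∈ D, S ≠ ∅ ∧ S ≠ Finset.univ) ∧
      ∃ i : Fin n, ∀ S ∈ D, i ∈ S)).card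

/-- `gval n` is the number of nonempty families of nonempty subsets of `Fin n`
whose union is everything. -/
def gval (n : ℕ) : ℕ :=
  (Finset.univ.filter (fun E : Finset (Finset (Fin n)) =>
    E.Nonempty ∧ (∀ S ∈ E, S ≠ ∅) ∧ E.sup id = Finset.univ)).card

def complEmb (n : ℕ) : Finset (Fin n) ↪ Finset (Fin n) := ⟨fun S => Sᶜ, compl_injective⟩

lemma fval_eq_compl (n : ℕ) :
    fval n = (Finset.univ.filter (fun E : Finset (Finset (Fin n)) =>
      E.Nonempty ∧ (∀ S ∈ E, S ≠ ∅) ∧ E.sup id ≠ Finset.univ)).card := by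
  classical
  apply Finset.card_bij (fun D _ => D.map (complEmb n))
  · -- maps to
    rintro D hD
    simp only [mem_filter, mem_univ, true_and] at hD ⊢
    obtain ⟨hne, hprop, i, hi⟩ := hD
    refine ⟨Finset.map_nonempty.2 hne, ?_, ?_⟩
    · rintro S hS
      rw [Finset.mem_map] at hS
      obtain ⟨T, hT, rfl⟩ := hS
      simpa [complEmb, compl_eq_bot] using (hprop T hT).2
    · intro hsup
      have : i ∈ (D.map (complEmb n)).sup id := hsup ▸ mem_univ i
      rw [Finset.mem_sup] at this
      obtain ⟨S, hS, hiS⟩ := this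
      rw [Finset.mem_map] at hS
      obtain ⟨T, hT, rfl⟩ := hS
      exact absurd (hi T hT) (by simpa [complEmb] using hiS)
  · -- inj
    intro D₁ h₁ D₂ h₂ h
    exact Finset.map_injective _ h
  · -- surj
    intro E hE
    simp only [mem_filter, mem_univ, true_and] at hE
    obtain ⟨hne, hprop, hsup⟩ := hE
    have hjj : ∃ j, j ∉ E.sup id := by
      by_contra h
      push_neg at h
      exact hsup (Finset.eq_univ_iff_forall.2 h)
    obtain ⟨j, hj⟩ := hjj
    refine ⟨E.map (complEmb n), ?_, ?_⟩
    · simp only [mem_filter, mem_univ, true_and]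
      refine ⟨Finset.map_nonempty.2 hne, ?_, j, ?_⟩
      · rintro S hS
        rw [Finset.mem_map] at hS
        obtain ⟨T, hT, rfl⟩ := hS
        constructor
        · simp only [complEmb, Function.Embedding.coeFn_mk, ne_eq, compl_eq_bot]
          intro h
          have h' : T = Finset.univ := compl_eq_bot.1 h
          subst h'
          exact hsup (Finset.eq_univ_iff_forall.2 fun x =>
            Finset.le_sup (f := id) hT (mem_univ x))
        · simpa [complEmb, compl_eq_top] using hprop T hT
      · rintro S hS
        rw [Finset.mem_map] at hS
        obtain ⟨T, hT, rfl⟩ := hS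
        simp only [complEmb, Function.Embedding.coeFn_mk, Finset.mem_compl]
        exact fun hjT => hj (Finset.le_sup (f := id) hT hjT)
    · ext S
      simp only [Finset.mem_map, complEmb, Function.Embedding.coeFn_mk]
      constructor
      · rintro ⟨T, ⟨T', hT', rfl⟩, rfl⟩
        simpa using hT'
      · intro hS
        exact ⟨Sᶜ, ⟨S, hS, rfl⟩, by simp⟩

lemma gval_add_aux (n : ℕ) :
    (Finset.univ.filter (fun E : Finset (Finset (Fin n)) =>
      E.Nonempty ∧ (∀ S ∈ E, S ≠ ∅))).card = 2 ^ (2 ^ n - 1) - 1 := by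
  classical
  have h1 : (Finset.univ.filter (fun E : Finset (Finset (Fin n)) =>
      E.Nonempty ∧ (∀ S ∈ E, S ≠ ∅)))
      = (((Finset.univ : Finset (Finset (Fin n))).erase ∅).powerset).erase ∅ := by
    ext E
    simp only [mem_filter, mem_univ, true_and, mem_erase, mem_powerset,
      Finset.subset_iff, Finset.mem_erase, Finset.nonempty_iff_ne_empty]
    aesop
  rw [h1, Finset.card_erase_of_mem (by simp), Finset.card_powerset,
    Finset.card_erase_of_mem (mem_univ _), Finset.card_univ]
  simp

lemma supmap {n k : ℕ} (e : Fin k ↪ Fin n) (E : Finset (Finset (Fin k))) :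
    E.sup (fun S => S.map e) = (E.sup id).map e := by
  classical
  induction E using Finset.induction_on with
  | empty => simp
  | insert a s h ih =>
    rw [Finset.sup_insert, Finset.sup_insert, ih]
    simp only [id_eq, Finset.sup_eq_union, Finset.map_union]

lemma cover_card {n : ℕ} (U : Finset (Fin n)) :
    (Finset.univ.filter (fun E : Finset (Finset (Fin n)) =>
      E.Nonempty ∧ (∀ S ∈ E, S ≠ ∅) ∧ E.sup id = U)).card = gval U.card := by
  classical
  set k := U.card with hk
  set ι : Fin k ↪ Fin n := (U.orderEmbOfFin rfl).toEmbedding with hι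
  have hrange : ∀ x, x ∈ U ↔ x ∈ Set.range ι := by
    intro x
    rw [hι]
    simp [Finset.range_orderEmbOfFin]
  have huniv : (Finset.univ : Finset (Fin k)).map ι = U := by
    apply Finset.eq_of_subset_of_card_le
    · intro x hx
      rw [Finset.mem_map] at hx
      obtain ⟨i, _, rfl⟩ := hx
      exact Finset.orderEmbOfFin_mem U rfl i
    · rw [Finset.card_map, Finset.card_univ, Fintype.card_fin]
  set m : Finset (Fin k) ↪ Finset (Fin n) :=
    ⟨fun S => S.map ι, Finset.map_injective ι⟩ with hm
  symm
  apply Finset.card_bij (fun E _ => E.map m)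
  · rintro E hE
    simp only [gval, mem_filter, mem_univ, true_and] at hE ⊢
    obtain ⟨hne, hprop, hsup⟩ := hE
    refine ⟨Finset.map_nonempty.2 hne, ?_, ?_⟩
    · rintro S hS
      rw [Finset.mem_map] at hS
      obtain ⟨T, hT, rfl⟩ := hS
      simpa [hm, Finset.map_eq_empty] using hprop T hT
    · rw [Finset.sup_map]
      have : (id ∘ m) = fun S : Finset (Fin k) => S.map ι := rfl
      rw [this, supmap, hsup, huniv]
  · intro E₁ _ E₂ _ h
    exact Finset.map_injective m h
  · intro E' hE'
    simp only [mem_filter, mem_univ, true_and] at hE'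
    obtain ⟨hne, hprop, hsup⟩ := hE'
    have hsub : ∀ S ∈ E', ∀ x ∈ S, x ∈ Set.range ι := by
      intro S hS x hx
      rw [← hrange]
      rw [← hsup]
      exact Finset.le_sup (f := id) hS hx
    set g : Finset (Fin n) → Finset (Fin k) :=
      fun S => S.preimage ι ι.injective.injOn with hg
    have key : ∀ S ∈ E', (g S).map ι = S := by
      intro S hS
      rw [hg, Finset.map_eq_image, Finset.image_preimage]
      exact Finset.filter_true_of_mem (hsub S hS)
    have hmapg : (E'.image g).map m = E' := by
      rw [Finset.map_eq_image, Finset.image_image]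
      rw [show ((⇑m) ∘ g) = fun S => (g S).map ι from rfl]
      calc E'.image (fun S => (g S).map ι) = E'.image id :=
            Finset.image_congr (fun S hS => key S hS)
        _ = E' := Finset.image_id
    refine ⟨E'.image g, ?_, hmapg⟩
    simp only [gval, mem_filter, mem_univ, true_and]
    refine ⟨hne.image g, ?_, ?_⟩
    · rintro S hS
      rw [Finset.mem_image] at hS
      obtain ⟨T, hT, rfl⟩ := hS
      intro h0
      have := key T hT
      rw [h0] at this
      simp only [Finset.map_empty] at this
      exact hprop T hT this.symm
    · apply Finset.map_injective ι
      rw [← supmap, huniv]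
      rw [Finset.sup_image]
      calc E'.sup ((fun S => Finset.map ι S) ∘ g) = E'.sup id :=
            Finset.sup_congr rfl (fun S hS => key S hS)
        _ = U := hsup

lemma gval_add_fval (k : ℕ) : gval k + fval k = 2 ^ (2 ^ k - 1) - 1 := by
  classical
  rw [fval_eq_compl]
  have hsplit := Finset.card_filter_add_card_filter_not
    (s := Finset.univ.filter (fun E : Finset (Finset (Fin k)) =>
      E.Nonempty ∧ (∀ S ∈ E, S ≠ ∅)))
    (p := fun E => E.sup id = Finset.univ)
  rw [Finset.filter_filter, Finset.filter_filter] at hsplit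
  rw [gval_add_aux] at hsplit
  have e1 : (Finset.univ.filter fun E : Finset (Finset (Fin k)) =>
      (E.Nonempty ∧ (∀ S ∈ E, S ≠ ∅)) ∧ E.sup id = Finset.univ)
      = Finset.univ.filter fun E : Finset (Finset (Fin k)) =>
      E.Nonempty ∧ (∀ S ∈ E, S ≠ ∅) ∧ E.sup id = Finset.univ := by
    apply Finset.filter_congr; intro E _; rw [and_assoc]
  have e2 : (Finset.univ.filter fun E : Finset (Finset (Fin k)) =>
      (E.Nonempty ∧ (∀ S ∈ E, S ≠ ∅)) ∧ ¬ E.sup id = Finset.univ)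
      = Finset.univ.filter fun E : Finset (Finset (Fin k)) =>
      E.Nonempty ∧ (∀ S ∈ E, S ≠ ∅) ∧ E.sup id ≠ Finset.univ := by
    apply Finset.filter_congr; intro E _; rw [and_assoc]
  rw [e1, e2] at hsplit
  exact hsplit

lemma fval_sum (n : ℕ) (hn : 1 ≤ n) :
    fval n = ∑ k ∈ Finset.Ico 1 n, n.choose k * gval k := by
  classical
  rw [fval_eq_compl]
  rw [Finset.card_eq_sum_card_fiberwise
    (f := fun E : Finset (Finset (Fin n)) => E.sup id)
    (t := Finset.univ.filter (fun U : Finset (Fin n) => U ≠ Finset.univ))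
    (fun E hE => by
      simp only [Finset.mem_coe, mem_filter, mem_univ, true_and] at hE ⊢
      exact hE.2.2)]
  have hfib : ∀ U ∈ Finset.univ.filter (fun U : Finset (Fin n) => U ≠ Finset.univ),
      ((Finset.univ.filter (fun E : Finset (Finset (Fin n)) =>
        E.Nonempty ∧ (∀ S ∈ E, S ≠ ∅) ∧ E.sup id ≠ Finset.univ)).filter
        (fun E => E.sup id = U)).card = gval U.card := by
    intro U hU
    simp only [mem_filter, mem_univ, true_and] at hU
    rw [Finset.filter_filter]
    rw [show (Finset.univ.filter fun E : Finset (Finset (Fin n)) =>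
        (E.Nonempty ∧ (∀ S ∈ E, S ≠ ∅) ∧ E.sup id ≠ Finset.univ) ∧ E.sup id = U)
        = Finset.univ.filter fun E : Finset (Finset (Fin n)) =>
        E.Nonempty ∧ (∀ S ∈ E, S ≠ ∅) ∧ E.sup id = U from by
      apply Finset.filter_congr
      intro E _
      constructor
      · rintro ⟨⟨h1, h2, _⟩, h3⟩; exact ⟨h1, h2, h3⟩
      · rintro ⟨h1, h2, h3⟩; exact ⟨⟨h1, h2, h3 ▸ hU⟩, h3⟩]
    exact cover_card U
  rw [Finset.sum_congr rfl hfib]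
  have h2 : ∑ U ∈ Finset.univ.filter (fun U : Finset (Fin n) => U ≠ Finset.univ),
      gval U.card = ∑ U ∈ (Finset.univ : Finset (Fin n)).powerset,
        (if U.card = n then 0 else gval U.card) := by
    rw [Finset.powerset_univ, Finset.sum_filter]
    apply Finset.sum_congr rfl
    intro U _
    by_cases h : U = Finset.univ
    · subst h; simp
    · rw [if_pos h, if_neg]
      intro hc
      exact h ((Finset.card_eq_iff_eq_univ U).1 (by simpa using hc))
  rw [h2]
  rw [Finset.sum_powerset_apply_card (fun j => if j = n then 0 else gval j)]
  simp only [Finset.card_univ, Fintype.card_fin, smul_eq_mul]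
  rw [Finset.sum_range_succ, if_pos rfl, mul_zero, add_zero]
  rw [Finset.range_eq_Ico, show Finset.Ico 0 n = insert 0 (Finset.Ico 1 n) from
    (Finset.insert_Ico_add_one_left_eq_Ico hn).symm, Finset.sum_insert (by simp)]
  have hg0 : gval 0 = 0 := by decide
  rw [if_neg (by omega), hg0, mul_zero, zero_add]
  apply Finset.sum_congr rfl
  intro x hx
  rw [Finset.mem_Ico] at hx
  rw [if_neg (by omega)]

/-- Recursion: `f_1 = 0` and
`f_n = Σ_{k=1}^{n-1} C(n,k) (2^(2^k - 1) - f_k - 1)` for `n > 1`. -/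
theorem fval_recursion :
    fval 1 = 0 ∧
    ∀ n : ℕ, 1 < n →
      fval n = ∑ k ∈ Finset.Ico 1 n,
        n.choose k * (2 ^ (2 ^ k - 1) - fval k - 1) := by
  constructor
  · decide
  · intro n hn
    rw [fval_sum n (le_of_lt hn)]
    apply Finset.sum_congr rfl
    intro k _
    congr 1
    have h := gval_add_fval k
    have hpow : 1 ≤ 2 ^ (2 ^ k - 1) := Nat.one_le_two_pow
    omega
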